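/- Let A be an n×n invertible matrix and 1 ≤ k ≤ n−1. The determinant of the (n−k)×(n−k) submatrix of A^{-1} obtained by deleting the first k rows and first k columns equals det(A_k)/det(A), where A_k is the leading principal k×k submatrix of A. -/

import Mathlib

/-- Jacobi's identity: if `A` is an invertible `(k+m) × (k+m)` matrix (with `1 ≤ k`, `1 ≤ m`,
so `1 ≤ k ≤ n-1` for `n = k+m`), then the determinant of the submatrix of `A⁻¹` obtained by
deleting the first `k` rows and columns equals `det(A_k) / det(A)`, where `A_k` is the leading
principal `k × k` submatrix of `A`. -/
theorem stmt_2 {F : Type*} [Field F] {k m : ℕ} (hk : 1 ≤ k) (hm : 1 ≤ m)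
    (A : Matrix (Fin (k + m)) (Fin (k + m)) F) (hA : IsUnit A.det) :
    ((A⁻¹).submatrix (Fin.natAdd k) (Fin.natAdd k) : Matrix (Fin m) (Fin m) F).det =
      (A.submatrix (Fin.castAdd m) (Fin.castAdd m) : Matrix (Fin k) (Fin k) F).det / A.det := by
  set e : Fin k ⊕ Fin m ≃ Fin (k + m) := finSumFinEquiv
  set A' : Matrix (Fin k ⊕ Fin m) (Fin k ⊕ Fin m) F := A.submatrix e e with hA'
  set B' : Matrix (Fin k ⊕ Fin m) (Fin k ⊕ Fin m) F := (A⁻¹).submatrix e e with hB'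
  have hmul : A' * B' = 1 := by
    rw [hA', hB', Matrix.submatrix_mul_equiv, Matrix.mul_nonsing_inv _ hA]
    simp
  have hblocks : A' * Matrix.fromBlocks 1 B'.toBlocks₁₂ 0 B'.toBlocks₂₂ =
      Matrix.fromBlocks A'.toBlocks₁₁ 0 A'.toBlocks₂₁ 1 := by
    have hA'b : A' = Matrix.fromBlocks A'.toBlocks₁₁ A'.toBlocks₁₂ A'.toBlocks₂₁ A'.toBlocks₂₂ :=
      (Matrix.fromBlocks_toBlocks A').symm
    have hB'b : B' = Matrix.fromBlocks B'.toBlocks₁₁ B'.toBlocks₁₂ B'.toBlocks₂₁ B'.toBlocks₂₂ :=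
      (Matrix.fromBlocks_toBlocks B').symm
    have h1 := hmul
    rw [hA'b, hB'b, Matrix.fromBlocks_multiply, ← Matrix.fromBlocks_one] at h1
    have h12 : A'.toBlocks₁₁ * B'.toBlocks₁₂ + A'.toBlocks₁₂ * B'.toBlocks₂₂ = 0 := by
      have := congrArg Matrix.toBlocks₁₂ h1; simp only [Matrix.toBlocks_fromBlocks₁₂] at this; simpa using this
    have h22 : A'.toBlocks₂₁ * B'.toBlocks₁₂ + A'.toBlocks₂₂ * B'.toBlocks₂₂ = 1 := by
      have := congrArg Matrix.toBlocks₂₂ h1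
      simp only [← Matrix.fromBlocks_one, Matrix.toBlocks_fromBlocks₂₂] at this
      simpa using this
    conv_lhs => rw [hA'b]
    rw [Matrix.fromBlocks_multiply]
    simp [h12, h22]
  have hdet := congrArg Matrix.det hblocks
  rw [Matrix.det_mul, Matrix.det_fromBlocks_zero₂₁, Matrix.det_fromBlocks_zero₁₂] at hdet
  simp only [Matrix.det_one, one_mul, mul_one] at hdet
  have hdetA' : A'.det = A.det := Matrix.det_submatrix_equiv_self e A
  have hAne : A.det ≠ 0 := hA.ne_zero
  have hgoal1 : B'.toBlocks₂₂ = (A⁻¹).submatrix (Fin.natAdd k) (Fin.natAdd k) := by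
    ext i j
    simp [hB', Matrix.toBlocks₂₂, e, finSumFinEquiv]
  have hgoal2 : A'.toBlocks₁₁ = A.submatrix (Fin.castAdd m) (Fin.castAdd m) := by
    ext i j
    simp [hA', Matrix.toBlocks₁₁, e, finSumFinEquiv]
  rw [← hgoal1, ← hgoal2, eq_div_iff hAne, ← hdetA', mul_comm]
  exact hdet
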